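/- The strict gadget has exactly four subtours, namely T1, T2, T3, and T4. Moreover: T1 is a single path with endpoints Z and Z'; T2 is the disjoint union of a path with endpoints X and X' and a path with endpoints Z and Z'; T3 is the disjoint union of a path with endpoints Y and Y' and a path with endpoints Z and Z'; and T4 is the disjoint union of three paths with endpoint pairs (X, X'), (Y, Y'), and (Z, Z'). In particular, for each of these four types the strict gadget has a unique subtour of that type, and the strict gadget has no subtour of any other type. -/

import Mathlib

open SimpleGraph

noncomputable section

/-- The degree of a vertex `v` in a simple graph `G` (as a set cardinality). -/
def gdeg {V : Type*} (G : SimpleGraph V) (v : V) : ℕ := {u | G.Adj v u}.ncard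

/-- The 14 vertices of the strict gadget. -/
inductive SGV : Type
  | X | X' | Y | Y' | Z | Z' | a | a' | b | b' | m1 | m2 | m3 | m4
  deriving DecidableEq

open SGV

/-- The eight subdivision edges of the strict gadget. -/
def subdivEdges : Set (Sym2 SGV) :=
  {s(a', m1), s(m1, X), s(a, m2), s(m2, X'), s(b, m3), s(m3, b'), s(Y, m4), s(m4, Y')}

/-- The edge set of the strict gadget. -/
def strictEdges : Set (Sym2 SGV) :=
  subdivEdges ∪
    {s(a, b), s(a', b'), s(X, b), s(X', b'), s(Y', a), s(a, Z'), s(Y, Z'), s(Z, a'),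
     s(Z, Y'), s(Z, Z')}

/-- The strict gadget. -/
def strictGadget : SimpleGraph SGV := SimpleGraph.fromEdgeSet strictEdges

/-- A subtour of the strict gadget, given by its edge set `T`: a spanning disjoint union
of paths (acyclic, all degrees 1 or 2) in which `Z` and `Z'` have degree one and every
degree-one vertex lies in `{X, X', Y, Y', Z, Z'}`. -/
def IsStrictSubtour (T : Set (Sym2 SGV)) : Prop :=
  T ⊆ strictGadget.edgeSet ∧
  (SimpleGraph.fromEdgeSet T).IsAcyclic ∧
  (∀ v : SGV, gdeg (SimpleGraph.fromEdgeSet T) v = 1 ∨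
      gdeg (SimpleGraph.fromEdgeSet T) v = 2) ∧
  gdeg (SimpleGraph.fromEdgeSet T) Z = 1 ∧
  gdeg (SimpleGraph.fromEdgeSet T) Z' = 1 ∧
  (∀ v : SGV, gdeg (SimpleGraph.fromEdgeSet T) v = 1 →
      v ∈ ({X, X', Y, Y', Z, Z'} : Set SGV))

/-- The four standard subtours of the strict gadget. -/
def T1 : Set (Sym2 SGV) := subdivEdges ∪ {s(X, b), s(Y', a), s(X', b'), s(Y, Z'), s(Z, a')}
def T2 : Set (Sym2 SGV) := subdivEdges ∪ {s(a', b'), s(a, b), s(Z, Y'), s(Y, Z')}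
def T3 : Set (Sym2 SGV) := subdivEdges ∪ {s(X, b), s(X', b'), s(a, Z'), s(Z, a')}
def T4 : Set (Sym2 SGV) := subdivEdges ∪ {s(a', b'), s(a, b), s(Z, Z')}

/-- `G` is a single spanning path with endpoints `z` and `z'`. -/
def IsOnePath {W : Type*} (G : SimpleGraph W) (z z' : W) : Prop :=
  G.IsAcyclic ∧ (∀ v : W, gdeg G v = 1 ∨ gdeg G v = 2) ∧
  {v | gdeg G v = 1} = {z, z'} ∧ z ≠ z' ∧ G.Reachable z z'

/-- `G` is a spanning disjoint union of an `xx'`-path and a `zz'`-path. -/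
def IsTwoPaths {W : Type*} (G : SimpleGraph W) (x x' z z' : W) : Prop :=
  G.IsAcyclic ∧ (∀ v : W, gdeg G v = 1 ∨ gdeg G v = 2) ∧
  {v | gdeg G v = 1} = {x, x', z, z'} ∧ [x, x', z, z'].Nodup ∧
  G.Reachable x x' ∧ G.Reachable z z' ∧ ¬ G.Reachable x z

/-- `G` is a spanning disjoint union of an `xx'`-path, a `yy'`-path and a `zz'`-path. -/
def IsThreePaths {W : Type*} (G : SimpleGraph W) (x x' y y' z z' : W) : Prop :=
  G.IsAcyclic ∧ (∀ v : W, gdeg G v = 1 ∨ gdeg G v = 2) ∧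
  {v | gdeg G v = 1} = {x, x', y, y', z, z'} ∧ [x, x', y, y', z, z'].Nodup ∧
  G.Reachable x x' ∧ G.Reachable y y' ∧ G.Reachable z z' ∧
  ¬ G.Reachable x y ∧ ¬ G.Reachable x z ∧ ¬ G.Reachable y z


set_option maxRecDepth 20000
instance : Fintype SGV :=
  ⟨⟨↑[X, X', Y, Y', Z, Z', a, a', b, b', m1, m2, m3, m4], by decide⟩, fun x => by cases x <;> decide⟩

/-! ### The infinite path graph on `ℕ` and its acyclicity -/

def NatPath : SimpleGraph ℕ := SimpleGraph.fromRel (fun x y => x + 1 = y)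

lemma natPath_adj {x y : ℕ} (h : NatPath.Adj x y) : x + 1 = y ∨ y + 1 = x := by
  rw [NatPath, fromRel_adj] at h; exact h.2

lemma exists_last_edge {V : Type*} {G : SimpleGraph V} {x y : V} (q : G.Walk x y)
    (h : ¬ q.Nil) : ∃ w, w ∈ q.support ∧ s(w, y) ∈ q.edges := by
  induction q with
  | nil => simp at h
  | @cons a b c hadj r ih =>
    by_cases hr : r.Nil
    · have hbc : b = c := hr.eq
      subst hbc
      exact ⟨a, by simp, by simp⟩
    · obtain ⟨w, hws, hwe⟩ := ih hr
      exact ⟨w, by simp [hws], by simp [hwe]⟩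

theorem natPath_acyclic : NatPath.IsAcyclic := by
  intro v c hc
  have hSne : c.support.toFinset.Nonempty := ⟨v, by simp⟩
  set M := c.support.toFinset.max' hSne with hMdef
  have hMmem : M ∈ c.support := by
    have := c.support.toFinset.max'_mem hSne; simpa using this
  have hbound : ∀ x ∈ c.support, x ≤ M := fun x hx =>
    c.support.toFinset.le_max' x (by simpa using hx)
  have hc' := hc.rotate hMmem
  have hbound' : ∀ x ∈ (c.rotate M hMmem).support, x ≤ M := by
    intro x hx
    rw [SimpleGraph.Walk.support_eq_cons] at hx
    rcases List.mem_cons.mp hx with rfl | hx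
    · exact le_refl M
    · exact hbound x (List.mem_of_mem_tail
        ((SimpleGraph.Walk.support_rotate c M hMmem).mem_iff.mp (by simpa using hx)))
  generalize hgen : c.rotate M hMmem = c₂ at hc' hbound'
  cases c₂ with
  | nil => exact hc'.ne_nil rfl
  | @cons _ u _ h q =>
    have huM : u ≠ M := fun he => (NatPath.ne_of_adj h) he.symm
    have hule : u ≤ M := hbound' u (by simp [q.start_mem_support])
    have hu : u + 1 = M := by rcases natPath_adj h with h' | h' <;> omega
    have hqnil : ¬ q.Nil := SimpleGraph.Walk.not_nil_of_ne huM
    obtain ⟨w, hws, hwe⟩ := exists_last_edge q hqnil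
    have hadjw : NatPath.Adj w M := SimpleGraph.Walk.adj_of_mem_edges q hwe
    have hwle : w ≤ M := hbound' w (by simp [hws])
    have hwM : w ≠ M := NatPath.ne_of_adj hadjw
    have hw : w + 1 = M := by rcases natPath_adj hadjw with h' | h' <;> omega
    have hwu : w = u := by omega
    subst hwu
    have htrail := hc'.isTrail
    rw [SimpleGraph.Walk.isTrail_cons] at htrail
    exact htrail.2 (by rwa [Sym2.eq_swap] at hwe)

theorem acyclic_of_labels {V : Type*} {G : SimpleGraph V} (f : V → ℕ)
    (hinj : Function.Injective f)
    (hstep : ∀ u v, G.Adj u v → f u + 1 = f v ∨ f v + 1 = f u) : G.IsAcyclic := by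
  intro v c hc
  have hrel : ∀ {u w : V}, G.Adj u w → NatPath.Adj (f u) (f w) := fun {u w} h => by
    rw [NatPath, fromRel_adj]
    exact ⟨fun e => (G.ne_of_adj h) (hinj e), hstep u w h⟩
  exact natPath_acyclic (c.map ⟨f, hrel⟩) (hc.map (f := ⟨f, hrel⟩) hinj)

/-! ### Generic small lemmas -/

instance instAdjDec {V : Type*} [DecidableEq V] (F : Finset (Sym2 V)) :
    DecidableRel (SimpleGraph.fromEdgeSet (↑F : Set (Sym2 V))).Adj := fun u v =>
  decidable_of_iff (s(u, v) ∈ F ∧ u ≠ v) (by rw [fromEdgeSet_adj]; simp)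

lemma gdeg_eq {V : Type*} [Fintype V] (G : SimpleGraph V) [DecidableRel G.Adj] (v : V) :
    gdeg G v = G.degree v := by
  unfold gdeg
  rw [show {u | G.Adj v u} = G.neighborSet v from rfl, Set.ncard_eq_toFinset_card',
    Set.toFinset_card, card_neighborSet_eq_degree]

lemma walk_const {V : Type*} {G : SimpleGraph V} (g : V → ℕ)
    (hg : ∀ u v, G.Adj u v → g u = g v) : ∀ {x y : V}, G.Walk x y → g x = g y := by
  intro x y w
  induction w with
  | nil => rfl
  | cons h p ih => exact (hg _ _ h).trans ih

lemma not_reachable {V : Type*} {G : SimpleGraph V} (g : V → ℕ)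
    (hg : ∀ u v, G.Adj u v → g u = g v) {x y : V} (hxy : g x ≠ g y) :
    ¬ G.Reachable x y := fun r => hxy (r.elim (fun w => walk_const g hg w))

lemma nbrs1 {V : Type*} {G : SimpleGraph V} {v : V} (h : gdeg G v = 1) :
    ∃ c, G.Adj v c ∧ ∀ u, G.Adj v u → u = c := by
  unfold gdeg at h
  obtain ⟨c, hc⟩ := Set.ncard_eq_one.mp h
  refine ⟨c, ?_, fun u hu => ?_⟩
  · show c ∈ {x | G.Adj v x}
    rw [hc]; rfl
  · have : u ∈ ({c} : Set V) := by rw [← hc]; exact hu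
    exact this

lemma nbrs2 {V : Type*} {G : SimpleGraph V} {v : V} (h : gdeg G v = 2) :
    ∃ c d, c ≠ d ∧ G.Adj v c ∧ G.Adj v d ∧ ∀ u, G.Adj v u → u = c ∨ u = d := by
  unfold gdeg at h
  obtain ⟨c, d, hcd, hS⟩ := Set.ncard_eq_two.mp h
  refine ⟨c, d, hcd, ?_, ?_, fun u hu => ?_⟩
  · show c ∈ {x | G.Adj v x}
    rw [hS]; exact Or.inl rfl
  · show d ∈ {x | G.Adj v x}
    rw [hS]; exact Or.inr rfl
  · have : u ∈ ({c, d} : Set V) := by rw [← hS]; exact hu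
    exact this

lemma forced2 {V : Type*} {G : SimpleGraph V} {v x y : V} (h : gdeg G v = 2)
    (hc : ∀ u, G.Adj v u → u = x ∨ u = y) : G.Adj v x ∧ G.Adj v y := by
  obtain ⟨c, d, hcd, hC, hD, hall⟩ := nbrs2 h
  rcases hc c hC with rfl | rfl <;> rcases hc d hD with rfl | rfl
  · exact absurd rfl hcd
  · exact ⟨hC, hD⟩
  · exact ⟨hD, hC⟩
  · exact absurd rfl hcd

lemma forced2' {V : Type*} {G : SimpleGraph V} {v x : V} (h : gdeg G v = 2)
    (hx : G.Adj v x) : ∃ u, u ≠ x ∧ G.Adj v u ∧ ∀ w, G.Adj v w → w = x ∨ w = u := by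
  obtain ⟨c, d, hcd, hC, hD, hall⟩ := nbrs2 h
  rcases hall x hx with rfl | rfl
  · exact ⟨d, Ne.symm hcd, hD, hall⟩
  · exact ⟨c, hcd, hC, fun w hw => (hall w hw).elim Or.inr Or.inl⟩

lemma notAdj {V : Type*} {G : SimpleGraph V} {v x u y : V}
    (hall : ∀ w, G.Adj v w → w = x ∨ w = u) (h1 : y ≠ x) (h2 : y ≠ u) :
    ¬ G.Adj v y := fun h => (hall y h).elim h1 h2

/-! ### Finset versions of the edge sets -/

def Efin : Finset (Sym2 SGV) :=
  {s(a, b), s(a', b'), s(X, b), s(X', b'), s(Y', a), s(a, Z'), s(Y, Z'), s(Z, a'),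
   s(Z, Y'), s(Z, Z'), s(a', m1), s(m1, X), s(a, m2), s(m2, X'), s(b, m3), s(m3, b'),
   s(Y, m4), s(m4, Y')}

def F1 : Finset (Sym2 SGV) :=
  {s(X, b), s(Y', a), s(X', b'), s(Y, Z'), s(Z, a'), s(a', m1), s(m1, X), s(a, m2),
   s(m2, X'), s(b, m3), s(m3, b'), s(Y, m4), s(m4, Y')}

def F2 : Finset (Sym2 SGV) :=
  {s(a', b'), s(a, b), s(Z, Y'), s(Y, Z'), s(a', m1), s(m1, X), s(a, m2),
   s(m2, X'), s(b, m3), s(m3, b'), s(Y, m4), s(m4, Y')}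

def F3 : Finset (Sym2 SGV) :=
  {s(X, b), s(X', b'), s(a, Z'), s(Z, a'), s(a', m1), s(m1, X), s(a, m2),
   s(m2, X'), s(b, m3), s(m3, b'), s(Y, m4), s(m4, Y')}

def F4 : Finset (Sym2 SGV) :=
  {s(a', b'), s(a, b), s(Z, Z'), s(a', m1), s(m1, X), s(a, m2),
   s(m2, X'), s(b, m3), s(m3, b'), s(Y, m4), s(m4, Y')}

lemma strictEdges_eq : strictEdges = (↑Efin : Set (Sym2 SGV)) := by
  ext e; simp [strictEdges, subdivEdges, Efin, or_assoc]

lemma T1_coe : T1 = (↑F1 : Set (Sym2 SGV)) := by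
  ext e; simp [T1, subdivEdges, F1, or_assoc]

lemma T2_coe : T2 = (↑F2 : Set (Sym2 SGV)) := by
  ext e; simp [T2, subdivEdges, F2, or_assoc]

lemma T3_coe : T3 = (↑F3 : Set (Sym2 SGV)) := by
  ext e; simp [T3, subdivEdges, F3, or_assoc]

lemma T4_coe : T4 = (↑F4 : Set (Sym2 SGV)) := by
  ext e; simp [T4, subdivEdges, F4, or_assoc]

lemma T_eq_coe {T : Set (Sym2 SGV)} (hTE : ∀ e ∈ T, e ∈ Efin) (F : Finset (Sym2 SGV))
    (pos : ∀ e ∈ F, e ∈ T) (neg : ∀ e ∈ Efin, e ∉ F → e ∉ T) : T = ↑F := by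
  ext e
  constructor
  · intro he
    by_cases h : e ∈ F
    · exact Finset.mem_coe.mpr h
    · exact absurd he (neg e (hTE e he) h)
  · intro he
    exact pos e (Finset.mem_coe.mp he)

/-! ### Two cycle configurations -/

lemma cycA {G : SimpleGraph SGV} (h01 : G.Adj X m1) (h12 : G.Adj m1 a')
    (h23 : G.Adj a' b') (h34 : G.Adj b' m3) (h45 : G.Adj m3 b) (h50 : G.Adj b X)
    (hac : G.IsAcyclic) : False := by
  apply hac (Walk.cons h01 (Walk.cons h12 (Walk.cons h23 (Walk.cons h34
    (Walk.cons h45 (Walk.cons h50 Walk.nil))))))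
  rw [Walk.isCycle_def, Walk.isTrail_def]
  refine ⟨?_, by simp, ?_⟩ <;> simp

lemma cycB {G : SimpleGraph SGV} (h01 : G.Adj a m2) (h12 : G.Adj m2 X')
    (h23 : G.Adj X' b') (h34 : G.Adj b' m3) (h45 : G.Adj m3 b) (h50 : G.Adj b a)
    (hac : G.IsAcyclic) : False := by
  apply hac (Walk.cons h01 (Walk.cons h12 (Walk.cons h23 (Walk.cons h34
    (Walk.cons h45 (Walk.cons h50 Walk.nil))))))
  rw [Walk.isCycle_def, Walk.isTrail_def]
  refine ⟨?_, by simp, ?_⟩ <;> simp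

/-! ### Label functions for acyclicity and component functions for non-reachability -/

def f1 : SGV → ℕ
  | Z => 0 | a' => 1 | m1 => 2 | X => 3 | b => 4 | m3 => 5 | b' => 6
  | X' => 7 | m2 => 8 | a => 9 | Y' => 10 | m4 => 11 | Y => 12 | Z' => 13

def f2 : SGV → ℕ
  | X => 0 | m1 => 1 | a' => 2 | b' => 3 | m3 => 4 | b => 5 | a => 6
  | m2 => 7 | X' => 8 | Z => 10 | Y' => 11 | m4 => 12 | Y => 13 | Z' => 14

def f3 : SGV → ℕ
  | Y => 0 | m4 => 1 | Y' => 2 | Z => 4 | a' => 5 | m1 => 6 | X => 7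
  | b => 8 | m3 => 9 | b' => 10 | X' => 11 | m2 => 12 | a => 13 | Z' => 14

def f4 : SGV → ℕ
  | X => 0 | m1 => 1 | a' => 2 | b' => 3 | m3 => 4 | b => 5 | a => 6
  | m2 => 7 | X' => 8 | Y => 10 | m4 => 11 | Y' => 12 | Z => 14 | Z' => 15

def g2 : SGV → ℕ
  | Z => 1 | Y' => 1 | m4 => 1 | Y => 1 | Z' => 1 | _ => 0

def g3 : SGV → ℕ
  | Y => 1 | m4 => 1 | Y' => 1 | _ => 0

def g4 : SGV → ℕ
  | Y => 1 | m4 => 1 | Y' => 1 | Z => 2 | Z' => 2 | _ => 0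

/-! ### Explicit walks -/

lemma r1zz : (SimpleGraph.fromEdgeSet (↑F1 : Set (Sym2 SGV))).Reachable Z Z' :=
  ⟨Walk.cons (by decide : (SimpleGraph.fromEdgeSet (↑F1 : Set (Sym2 SGV))).Adj Z a') (Walk.cons (by decide : (SimpleGraph.fromEdgeSet (↑F1 : Set (Sym2 SGV))).Adj a' m1) (Walk.cons (by decide : (SimpleGraph.fromEdgeSet (↑F1 : Set (Sym2 SGV))).Adj m1 X) (Walk.cons (by decide : (SimpleGraph.fromEdgeSet (↑F1 : Set (Sym2 SGV))).Adj X b) (Walk.cons (by decide : (SimpleGraph.fromEdgeSet (↑F1 : Set (Sym2 SGV))).Adj b m3) (Walk.cons (by decide : (SimpleGraph.fromEdgeSet (↑F1 : Set (Sym2 SGV))).Adj m3 b') (Walk.cons (by decide : (SimpleGraph.fromEdgeSet (↑F1 : Set (Sym2 SGV))).Adj b' X') (Walk.cons (by decide : (SimpleGraph.fromEdgeSet (↑F1 : Set (Sym2 SGV))).Adj X' m2) (Walk.cons (by decide : (SimpleGraph.fromEdgeSet (↑F1 : Set (Sym2 SGV))).Adj m2 a) (Walk.cons (by decide : (SimpleGraph.fromEdgeSet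 (↑F1 : Set (Sym2 SGV))).Adj a Y') (Walk.cons (by decide : (SimpleGraph.fromEdgeSet (↑F1 : Set (Sym2 SGV))).Adj Y' m4) (Walk.cons (by decide : (SimpleGraph.fromEdgeSet (↑F1 : Set (Sym2 SGV))).Adj m4 Y) (Walk.cons (by decide : (SimpleGraph.fromEdgeSet (↑F1 : Set (Sym2 SGV))).Adj Y Z') (Walk.nil)))))))))))))⟩

lemma r2xx : (SimpleGraph.fromEdgeSet (↑F2 : Set (Sym2 SGV))).Reachable X X' :=
  ⟨Walk.cons (by decide : (SimpleGraph.fromEdgeSet (↑F2 : Set (Sym2 SGV))).Adj X m1) (Walk.cons (by decide : (SimpleGraph.fromEdgeSet (↑F2 : Set (Sym2 SGV))).Adj m1 a') (Walk.cons (by decide : (SimpleGraph.fromEdgeSet (↑F2 : Set (Sym2 SGV))).Adj a' b') (Walk.cons (by decide : (SimpleGraph.fromEdgeSet (↑F2 : Set (Sym2 SGV))).Adj b' m3) (Walk.cons (by decide : (SimpleGraph.fromEdgeSet (↑F2 : Set (Sym2 SGV))).Adj m3 b) (Walk.cons (by decide : (SimpleGraph.fromEdgeSet (↑F2 : Set (Sym2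 SGV))).Adj b a) (Walk.cons (by decide : (SimpleGraph.fromEdgeSet (↑F2 : Set (Sym2 SGV))).Adj a m2) (Walk.cons (by decide : (SimpleGraph.fromEdgeSet (↑F2 : Set (Sym2 SGV))).Adj m2 X') (Walk.nil))))))))⟩

lemma r2zz : (SimpleGraph.fromEdgeSet (↑F2 : Set (Sym2 SGV))).Reachable Z Z' :=
  ⟨Walk.cons (by decide : (SimpleGraph.fromEdgeSet (↑F2 : Set (Sym2 SGV))).Adj Z Y') (Walk.cons (by decide : (SimpleGraph.fromEdgeSet (↑F2 : Set (Sym2 SGV))).Adj Y' m4) (Walk.cons (by decide : (SimpleGraph.fromEdgeSet (↑F2 : Set (Sym2 SGV))).Adj m4 Y) (Walk.cons (by decide : (SimpleGraph.fromEdgeSet (↑F2 : Set (Sym2 SGV))).Adj Y Z') (Walk.nil))))⟩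

lemma r3yy : (SimpleGraph.fromEdgeSet (↑F3 : Set (Sym2 SGV))).Reachable Y Y' :=
  ⟨Walk.cons (by decide : (SimpleGraph.fromEdgeSet (↑F3 : Set (Sym2 SGV))).Adj Y m4) (Walk.cons (by decide : (SimpleGraph.fromEdgeSet (↑F3 : Set (Sym2 SGV))).Adj m4 Y') (Walk.nil))⟩

lemma r3zz : (SimpleGraph.fromEdgeSet (↑F3 : Set (Sym2 SGV))).Reachable Z Z' :=
  ⟨Walk.cons (by decide : (SimpleGraph.fromEdgeSet (↑F3 : Set (Sym2 SGV))).Adj Z a') (Walk.cons (by decide : (SimpleGraph.fromEdgeSet (↑F3 : Set (Sym2 SGV))).Adj a' m1) (Walk.cons (by decide : (SimpleGraph.fromEdgeSet (↑F3 : Set (Sym2 SGV))).Adj m1 X) (Walk.cons (by decide : (SimpleGraph.fromEdgeSet (↑F3 : Set (Sym2 SGV))).Adj X b) (Walk.cons (by decide : (SimpleGraph.fromEdgeSet (↑F3 : Set (Sym2 SGV))).Adj b m3) (Walk.cons (by decide : (SimpleGraph.fromEdgeSet (↑F3 : Set (Sym2 SGV))).Adj m3 b') (Walk.cons (by decide :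 (SimpleGraph.fromEdgeSet (↑F3 : Set (Sym2 SGV))).Adj b' X') (Walk.cons (by decide : (SimpleGraph.fromEdgeSet (↑F3 : Set (Sym2 SGV))).Adj X' m2) (Walk.cons (by decide : (SimpleGraph.fromEdgeSet (↑F3 : Set (Sym2 SGV))).Adj m2 a) (Walk.cons (by decide : (SimpleGraph.fromEdgeSet (↑F3 : Set (Sym2 SGV))).Adj a Z') (Walk.nil))))))))))⟩

lemma r4xx : (SimpleGraph.fromEdgeSet (↑F4 : Set (Sym2 SGV))).Reachable X X' :=
  ⟨Walk.cons (by decide : (SimpleGraph.fromEdgeSet (↑F4 : Set (Sym2 SGV))).Adj X m1) (Walk.cons (by decide : (SimpleGraph.fromEdgeSet (↑F4 : Set (Sym2 SGV))).Adj m1 a') (Walk.cons (by decide : (SimpleGraph.fromEdgeSet (↑F4 : Set (Sym2 SGV))).Adj a' b') (Walk.cons (by decide : (SimpleGraph.fromEdgeSet (↑F4 : Set (Sym2 SGV))).Adj b' m3) (Walk.cons (by decide : (SimpleGraph.fromEdgeSet (↑F4 : Set (Sym2 SGV))).Adj m3 b) (Walk.cons (by decide : (SimpleGraph.fromEdgeSet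 (↑F4 : Set (Sym2 SGV))).Adj b a) (Walk.cons (by decide : (SimpleGraph.fromEdgeSet (↑F4 : Set (Sym2 SGV))).Adj a m2) (Walk.cons (by decide : (SimpleGraph.fromEdgeSet (↑F4 : Set (Sym2 SGV))).Adj m2 X') (Walk.nil))))))))⟩

lemma r4yy : (SimpleGraph.fromEdgeSet (↑F4 : Set (Sym2 SGV))).Reachable Y Y' :=
  ⟨Walk.cons (by decide : (SimpleGraph.fromEdgeSet (↑F4 : Set (Sym2 SGV))).Adj Y m4) (Walk.cons (by decide : (SimpleGraph.fromEdgeSet (↑F4 : Set (Sym2 SGV))).Adj m4 Y') (Walk.nil))⟩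

lemma r4zz : (SimpleGraph.fromEdgeSet (↑F4 : Set (Sym2 SGV))).Reachable Z Z' :=
  ⟨Walk.cons (by decide : (SimpleGraph.fromEdgeSet (↑F4 : Set (Sym2 SGV))).Adj Z Z') (Walk.nil)⟩

/-! ### The four standard subtours are subtours -/

lemma degOK_1 : ∀ v : SGV, (SimpleGraph.fromEdgeSet (↑F1 : Set (Sym2 SGV))).degree v = 1 ∨ (SimpleGraph.fromEdgeSet (↑F1 : Set (Sym2 SGV))).degree v = 2 := by decide

lemma acyc_1 : (SimpleGraph.fromEdgeSet (↑F1 : Set (Sym2 SGV))).IsAcyclic :=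
  acyclic_of_labels f1 (by decide) (by decide)

lemma subtour_1 : IsStrictSubtour T1 := by
  rw [T1_coe]
  refine ⟨?_, acyc_1, fun v => by rw [gdeg_eq]; exact degOK_1 v,
    by rw [gdeg_eq]; decide, by rw [gdeg_eq]; decide, ?_⟩
  · intro e he
    rw [strictGadget, edgeSet_fromEdgeSet]
    refine ⟨?_, ?_⟩
    · rw [strictEdges_eq]
      exact Finset.mem_coe.mpr ((by decide : ∀ x ∈ F1, x ∈ Efin) e (Finset.mem_coe.mp he))
    · exact (by decide : ∀ x ∈ F1, ¬ x.IsDiag) e (Finset.mem_coe.mp he)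
  · intro v h
    rw [gdeg_eq] at h
    have := (by decide : ∀ w : SGV, (SimpleGraph.fromEdgeSet (↑F1 : Set (Sym2 SGV))).degree w = 1 →
      (w = X ∨ w = X' ∨ w = Y ∨ w = Y' ∨ w = Z ∨ w = Z')) v h
    simp only [Set.mem_insert_iff, Set.mem_singleton_iff]
    exact this

lemma degOK_2 : ∀ v : SGV, (SimpleGraph.fromEdgeSet (↑F2 : Set (Sym2 SGV))).degree v = 1 ∨ (SimpleGraph.fromEdgeSet (↑F2 : Set (Sym2 SGV))).degree v = 2 := by decide

lemma acyc_2 : (SimpleGraph.fromEdgeSet (↑F2 : Set (Sym2 SGV))).IsAcyclic :=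
  acyclic_of_labels f2 (by decide) (by decide)

lemma subtour_2 : IsStrictSubtour T2 := by
  rw [T2_coe]
  refine ⟨?_, acyc_2, fun v => by rw [gdeg_eq]; exact degOK_2 v,
    by rw [gdeg_eq]; decide, by rw [gdeg_eq]; decide, ?_⟩
  · intro e he
    rw [strictGadget, edgeSet_fromEdgeSet]
    refine ⟨?_, ?_⟩
    · rw [strictEdges_eq]
      exact Finset.mem_coe.mpr ((by decide : ∀ x ∈ F2, x ∈ Efin) e (Finset.mem_coe.mp he))
    · exact (by decide : ∀ x ∈ F2, ¬ x.IsDiag) e (Finset.mem_coe.mp he)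
  · intro v h
    rw [gdeg_eq] at h
    have := (by decide : ∀ w : SGV, (SimpleGraph.fromEdgeSet (↑F2 : Set (Sym2 SGV))).degree w = 1 →
      (w = X ∨ w = X' ∨ w = Y ∨ w = Y' ∨ w = Z ∨ w = Z')) v h
    simp only [Set.mem_insert_iff, Set.mem_singleton_iff]
    exact this

lemma degOK_3 : ∀ v : SGV, (SimpleGraph.fromEdgeSet (↑F3 : Set (Sym2 SGV))).degree v = 1 ∨ (SimpleGraph.fromEdgeSet (↑F3 : Set (Sym2 SGV))).degree v = 2 := by decide

lemma acyc_3 : (SimpleGraph.fromEdgeSet (↑F3 : Set (Sym2 SGV))).IsAcyclic :=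
  acyclic_of_labels f3 (by decide) (by decide)

lemma subtour_3 : IsStrictSubtour T3 := by
  rw [T3_coe]
  refine ⟨?_, acyc_3, fun v => by rw [gdeg_eq]; exact degOK_3 v,
    by rw [gdeg_eq]; decide, by rw [gdeg_eq]; decide, ?_⟩
  · intro e he
    rw [strictGadget, edgeSet_fromEdgeSet]
    refine ⟨?_, ?_⟩
    · rw [strictEdges_eq]
      exact Finset.mem_coe.mpr ((by decide : ∀ x ∈ F3, x ∈ Efin) e (Finset.mem_coe.mp he))
    · exact (by decide : ∀ x ∈ F3, ¬ x.IsDiag) e (Finset.mem_coe.mp he)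
  · intro v h
    rw [gdeg_eq] at h
    have := (by decide : ∀ w : SGV, (SimpleGraph.fromEdgeSet (↑F3 : Set (Sym2 SGV))).degree w = 1 →
      (w = X ∨ w = X' ∨ w = Y ∨ w = Y' ∨ w = Z ∨ w = Z')) v h
    simp only [Set.mem_insert_iff, Set.mem_singleton_iff]
    exact this

lemma degOK_4 : ∀ v : SGV, (SimpleGraph.fromEdgeSet (↑F4 : Set (Sym2 SGV))).degree v = 1 ∨ (SimpleGraph.fromEdgeSet (↑F4 : Set (Sym2 SGV))).degree v = 2 := by decide

lemma acyc_4 : (SimpleGraph.fromEdgeSet (↑F4 : Set (Sym2 SGV))).IsAcyclic :=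
  acyclic_of_labels f4 (by decide) (by decide)

lemma subtour_4 : IsStrictSubtour T4 := by
  rw [T4_coe]
  refine ⟨?_, acyc_4, fun v => by rw [gdeg_eq]; exact degOK_4 v,
    by rw [gdeg_eq]; decide, by rw [gdeg_eq]; decide, ?_⟩
  · intro e he
    rw [strictGadget, edgeSet_fromEdgeSet]
    refine ⟨?_, ?_⟩
    · rw [strictEdges_eq]
      exact Finset.mem_coe.mpr ((by decide : ∀ x ∈ F4, x ∈ Efin) e (Finset.mem_coe.mp he))
    · exact (by decide : ∀ x ∈ F4, ¬ x.IsDiag) e (Finset.mem_coe.mp he)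
  · intro v h
    rw [gdeg_eq] at h
    have := (by decide : ∀ w : SGV, (SimpleGraph.fromEdgeSet (↑F4 : Set (Sym2 SGV))).degree w = 1 →
      (w = X ∨ w = X' ∨ w = Y ∨ w = Y' ∨ w = Z ∨ w = Z')) v h
    simp only [Set.mem_insert_iff, Set.mem_singleton_iff]
    exact this

lemma onepath_1 : IsOnePath (SimpleGraph.fromEdgeSet T1) Z Z' := by
  rw [T1_coe]
  refine ⟨acyc_1, fun v => by rw [gdeg_eq]; exact degOK_1 v, ?_, by decide, r1zz⟩
  ext v
  simp only [Set.mem_setOf_eq, gdeg_eq, Set.mem_insert_iff, Set.mem_singleton_iff]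
  exact (by decide : ∀ w : SGV, (SimpleGraph.fromEdgeSet (↑F1 : Set (Sym2 SGV))).degree w = 1 ↔ (w = Z ∨ w = Z')) v

lemma twopaths_2 : IsTwoPaths (SimpleGraph.fromEdgeSet T2) X X' Z Z' := by
  rw [T2_coe]
  refine ⟨acyc_2, fun v => by rw [gdeg_eq]; exact degOK_2 v, ?_, by decide, r2xx, r2zz,
    not_reachable g2 (by decide) (by decide)⟩
  ext v
  simp only [Set.mem_setOf_eq, gdeg_eq, Set.mem_insert_iff, Set.mem_singleton_iff]
  exact (by decide : ∀ w : SGV, (SimpleGraph.fromEdgeSet (↑F2 : Set (Sym2 SGV))).degree w = 1 ↔ (w = X ∨ w = X' ∨ w = Z ∨ w = Z')) v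

lemma twopaths_3 : IsTwoPaths (SimpleGraph.fromEdgeSet T3) Y Y' Z Z' := by
  rw [T3_coe]
  refine ⟨acyc_3, fun v => by rw [gdeg_eq]; exact degOK_3 v, ?_, by decide, r3yy, r3zz,
    not_reachable g3 (by decide) (by decide)⟩
  ext v
  simp only [Set.mem_setOf_eq, gdeg_eq, Set.mem_insert_iff, Set.mem_singleton_iff]
  exact (by decide : ∀ w : SGV, (SimpleGraph.fromEdgeSet (↑F3 : Set (Sym2 SGV))).degree w = 1 ↔ (w = Y ∨ w = Y' ∨ w = Z ∨ w = Z')) v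

lemma threepaths_4 : IsThreePaths (SimpleGraph.fromEdgeSet T4) X X' Y Y' Z Z' := by
  rw [T4_coe]
  refine ⟨acyc_4, fun v => by rw [gdeg_eq]; exact degOK_4 v, ?_, by decide, r4xx, r4yy, r4zz,
    not_reachable g4 (by decide) (by decide), not_reachable g4 (by decide) (by decide),
    not_reachable g4 (by decide) (by decide)⟩
  ext v
  simp only [Set.mem_setOf_eq, gdeg_eq, Set.mem_insert_iff, Set.mem_singleton_iff]
  exact (by decide : ∀ w : SGV, (SimpleGraph.fromEdgeSet (↑F4 : Set (Sym2 SGV))).degree w = 1 ↔ (w = X ∨ w = X' ∨ w = Y ∨ w = Y' ∨ w = Z ∨ w = Z')) v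


/-- the strict gadget has exactly the four subtours `T1, T2, T3, T4`; they
are pairwise distinct; `T1` is a single `ZZ'`-path; `T2` is an `XX'`-path together with a
`ZZ'`-path; `T3` is a `YY'`-path together with a `ZZ'`-path; and `T4` consists of an
`XX'`-path, a `YY'`-path and a `ZZ'`-path. -/
theorem stmt_6 :
    (∀ T : Set (Sym2 SGV), IsStrictSubtour T ↔ (T = T1 ∨ T = T2 ∨ T = T3 ∨ T = T4)) ∧
    (T1 ≠ T2 ∧ T1 ≠ T3 ∧ T1 ≠ T4 ∧ T2 ≠ T3 ∧ T2 ≠ T4 ∧ T3 ≠ T4) ∧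
    IsOnePath (SimpleGraph.fromEdgeSet T1) Z Z' ∧
    IsTwoPaths (SimpleGraph.fromEdgeSet T2) X X' Z Z' ∧
    IsTwoPaths (SimpleGraph.fromEdgeSet T3) Y Y' Z Z' ∧
    IsThreePaths (SimpleGraph.fromEdgeSet T4) X X' Y Y' Z Z' := by
  refine ⟨?_, ⟨?_, ?_, ?_, ?_, ?_, ?_⟩, onepath_1, twopaths_2, twopaths_3, threepaths_4⟩
  · intro T
    constructor
    · rintro ⟨hsub, hacyc, h3, h4, h5, h6⟩
      have hTE : ∀ e ∈ T, e ∈ Efin := by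
        intro e he
        have h' := hsub he
        rw [strictGadget, edgeSet_fromEdgeSet, strictEdges_eq] at h'
        exact Finset.mem_coe.mp h'.1
      have memT : ∀ {x y : SGV}, (SimpleGraph.fromEdgeSet T).Adj x y → s(x, y) ∈ T :=
        fun h => ((fromEdgeSet_adj _).mp h).1
      have adjT : ∀ {x y : SGV}, x ≠ y → s(x, y) ∈ T → (SimpleGraph.fromEdgeSet T).Adj x y :=
        fun hne hm => (fromEdgeSet_adj _).mpr ⟨hm, hne⟩
      have cand : ∀ x y : SGV, (SimpleGraph.fromEdgeSet T).Adj x y → s(x, y) ∈ Efin :=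
        fun _ _ h => hTE _ (memT h)
      have h6' : ∀ v : SGV, gdeg (SimpleGraph.fromEdgeSet T) v = 1 →
          (v = X ∨ v = X' ∨ v = Y ∨ v = Y' ∨ v = Z ∨ v = Z') := by
        intro v h
        have := h6 v h
        simpa [Set.mem_insert_iff] using this
      have dm1 : gdeg (SimpleGraph.fromEdgeSet T) m1 = 2 :=
        (h3 m1).resolve_left (fun h => by have := h6' m1 h; revert this; decide)
      have dm2 : gdeg (SimpleGraph.fromEdgeSet T) m2 = 2 :=
        (h3 m2).resolve_left (fun h => by have := h6' m2 h; revert this; decide)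
      have dm3 : gdeg (SimpleGraph.fromEdgeSet T) m3 = 2 :=
        (h3 m3).resolve_left (fun h => by have := h6' m3 h; revert this; decide)
      have dm4 : gdeg (SimpleGraph.fromEdgeSet T) m4 = 2 :=
        (h3 m4).resolve_left (fun h => by have := h6' m4 h; revert this; decide)
      have da : gdeg (SimpleGraph.fromEdgeSet T) a = 2 :=
        (h3 a).resolve_left (fun h => by have := h6' a h; revert this; decide)
      have da' : gdeg (SimpleGraph.fromEdgeSet T) a' = 2 :=
        (h3 a').resolve_left (fun h => by have := h6' a' h; revert this; decide)
      have db : gdeg (SimpleGraph.fromEdgeSet T) b = 2 :=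
        (h3 b).resolve_left (fun h => by have := h6' b h; revert this; decide)
      have db' : gdeg (SimpleGraph.fromEdgeSet T) b' = 2 :=
        (h3 b').resolve_left (fun h => by have := h6' b' h; revert this; decide)
      have cm1 : ∀ u, (SimpleGraph.fromEdgeSet T).Adj m1 u → (u = a' ∨ u = X) :=
        fun u h => (by decide : ∀ u, s(m1, u) ∈ Efin → (u = a' ∨ u = X)) u (cand m1 u h)
      have cm2 : ∀ u, (SimpleGraph.fromEdgeSet T).Adj m2 u → (u = a ∨ u = X') :=
        fun u h => (by decide : ∀ u, s(m2, u) ∈ Efin → (u = a ∨ u = X')) u (cand m2 u h)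
      have cm3 : ∀ u, (SimpleGraph.fromEdgeSet T).Adj m3 u → (u = b ∨ u = b') :=
        fun u h => (by decide : ∀ u, s(m3, u) ∈ Efin → (u = b ∨ u = b')) u (cand m3 u h)
      have cm4 : ∀ u, (SimpleGraph.fromEdgeSet T).Adj m4 u → (u = Y ∨ u = Y') :=
        fun u h => (by decide : ∀ u, s(m4, u) ∈ Efin → (u = Y ∨ u = Y')) u (cand m4 u h)
      have ca : ∀ u, (SimpleGraph.fromEdgeSet T).Adj a u → (u = m2 ∨ u = b ∨ u = Y' ∨ u = Z') :=
        fun u h => (by decide : ∀ u, s(a, u) ∈ Efin → (u = m2 ∨ u = b ∨ u = Y' ∨ u = Z')) u (cand a u h)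
      have ca' : ∀ u, (SimpleGraph.fromEdgeSet T).Adj a' u → (u = m1 ∨ u = b' ∨ u = Z) :=
        fun u h => (by decide : ∀ u, s(a', u) ∈ Efin → (u = m1 ∨ u = b' ∨ u = Z)) u (cand a' u h)
      have cb : ∀ u, (SimpleGraph.fromEdgeSet T).Adj b u → (u = m3 ∨ u = a ∨ u = X) :=
        fun u h => (by decide : ∀ u, s(b, u) ∈ Efin → (u = m3 ∨ u = a ∨ u = X)) u (cand b u h)
      have cb' : ∀ u, (SimpleGraph.fromEdgeSet T).Adj b' u → (u = m3 ∨ u = a' ∨ u = X') :=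
        fun u h => (by decide : ∀ u, s(b', u) ∈ Efin → (u = m3 ∨ u = a' ∨ u = X')) u (cand b' u h)
      have cZ : ∀ u, (SimpleGraph.fromEdgeSet T).Adj Z u → (u = a' ∨ u = Y' ∨ u = Z') :=
        fun u h => (by decide : ∀ u, s(Z, u) ∈ Efin → (u = a' ∨ u = Y' ∨ u = Z')) u (cand Z u h)
      have cZ' : ∀ u, (SimpleGraph.fromEdgeSet T).Adj Z' u → (u = a ∨ u = Y ∨ u = Z) :=
        fun u h => (by decide : ∀ u, s(Z', u) ∈ Efin → (u = a ∨ u = Y ∨ u = Z)) u (cand Z' u h)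
      have hm1 := forced2 dm1 cm1
      have hm2 := forced2 dm2 cm2
      have hm3 := forced2 dm3 cm3
      have hm4 := forced2 dm4 cm4
      obtain ⟨ua, huane, hua, haall⟩ := forced2' da hm2.1.symm
      have hua3 : ua = b ∨ ua = Y' ∨ ua = Z' := by
        rcases ca ua hua with h | h | h | h
        exacts [absurd h huane, Or.inl h, Or.inr (Or.inl h), Or.inr (Or.inr h)]
      obtain ⟨ua', hua'ne, hua', ha'all⟩ := forced2' da' hm1.1.symm
      have hua'2 : ua' = b' ∨ ua' = Z := by
        rcases ca' ua' hua' with h | h | h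
        exacts [absurd h hua'ne, Or.inl h, Or.inr h]
      obtain ⟨ub, hubne, hub, hball⟩ := forced2' db hm3.1.symm
      have hub2 : ub = a ∨ ub = X := by
        rcases cb ub hub with h | h | h
        exacts [absurd h hubne, Or.inl h, Or.inr h]
      obtain ⟨ub', hub'ne, hub', hb'all⟩ := forced2' db' hm3.2.symm
      have hub'2 : ub' = a' ∨ ub' = X' := by
        rcases cb' ub' hub' with h | h | h
        exacts [absurd h hub'ne, Or.inl h, Or.inr h]
      obtain ⟨cz, hcz, hzall⟩ := nbrs1 h4
      have hcz3 : cz = a' ∨ cz = Y' ∨ cz = Z' := cZ cz hcz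
      obtain ⟨cz', hcz', hz'all⟩ := nbrs1 h5
      have hcz'3 : cz' = a ∨ cz' = Y ∨ cz' = Z := cZ' cz' hcz'
      rcases hua3 with rfl | rfl | rfl
      · -- a is matched to b
        have naY' : ¬ (SimpleGraph.fromEdgeSet T).Adj a Y' := notAdj haall (by decide) (by decide)
        have naZ' : ¬ (SimpleGraph.fromEdgeSet T).Adj a Z' := notAdj haall (by decide) (by decide)
        obtain rfl : ub = a := by
          rcases hball a hua.symm with h | h
          · exact absurd h (by decide)
          · exact h.symm
        have nbX : ¬ (SimpleGraph.fromEdgeSet T).Adj b X := notAdj hball (by decide) (by decide)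
        have hcz'2 : cz' = Y ∨ cz' = Z := by
          rcases hcz'3 with rfl | h | h
          · exact absurd hcz'.symm naZ'
          exacts [Or.inl h, Or.inr h]
        rcases hua'2 with rfl | rfl
        · -- a' is matched to b'
          obtain rfl : ub' = a' := by
            rcases hb'all a' hua'.symm with h | h
            · exact absurd h (by decide)
            · exact h.symm
          have nb'X' : ¬ (SimpleGraph.fromEdgeSet T).Adj b' X' := notAdj hb'all (by decide) (by decide)
          have na'Z : ¬ (SimpleGraph.fromEdgeSet T).Adj a' Z := notAdj ha'all (by decide) (by decide)
          have hcz2 : cz = Y' ∨ cz = Z' := by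
            rcases hcz3 with rfl | h | h
            · exact absurd hcz.symm na'Z
            exacts [Or.inl h, Or.inr h]
          rcases hcz2 with rfl | rfl
          · -- Z is matched to Y' : this is T2
            have nZZ' : ¬ (SimpleGraph.fromEdgeSet T).Adj Z Z' := fun h => absurd (hzall Z' h) (by decide)
            obtain rfl : cz' = Y := by
              rcases hcz'2 with h | rfl
              · exact h
              · exact absurd hcz'.symm nZZ'
            refine Or.inr (Or.inl ?_)
            rw [T2_coe]
            refine T_eq_coe hTE F2 ?_ ?_
            · intro e he
              fin_cases he
              exacts [memT hua',
                      memT hua,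
                      memT hcz,
                      memT hcz'.symm,
                      memT hm1.1.symm,
                      memT hm1.2,
                      memT hm2.1.symm,
                      memT hm2.2,
                      memT hm3.1.symm,
                      memT hm3.2,
                      memT hm4.1.symm,
                      memT hm4.2]
            · intro e he hne
              fin_cases he
              exacts [absurd (by decide) hne,
                      absurd (by decide) hne,
                      fun hm => nbX ((adjT (by decide) hm).symm),
                      fun hm => nb'X' ((adjT (by decide) hm).symm),
                      fun hm => naY' ((adjT (by decide) hm).symm),
                      fun hm => naZ' ((adjT (by decide) hm)),
                      absurd (by decide) hne,
                      fun hm => na'Z ((adjT (by decide) hm).symm),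
                      absurd (by decide) hne,
                      fun hm => nZZ' ((adjT (by decide) hm)),
                      absurd (by decide) hne,
                      absurd (by decide) hne,
                      absurd (by decide) hne,
                      absurd (by decide) hne,
                      absurd (by decide) hne,
                      absurd (by decide) hne,
                      absurd (by decide) hne,
                      absurd (by decide) hne]
          · -- Z is matched to Z' : this is T4
            have nZY' : ¬ (SimpleGraph.fromEdgeSet T).Adj Z Y' := fun h => absurd (hzall Y' h) (by decide)
            obtain rfl : cz' = Z := by
              rcases hcz'2 with rfl | h
              · exact absurd (hz'all Z hcz.symm) (by decide)
              · exact h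
            have nZ'Y : ¬ (SimpleGraph.fromEdgeSet T).Adj Z' Y := fun h => absurd (hz'all Y h) (by decide)
            have na'Z : ¬ (SimpleGraph.fromEdgeSet T).Adj a' Z := notAdj ha'all (by decide) (by decide)
            refine Or.inr (Or.inr (Or.inr ?_))
            rw [T4_coe]
            refine T_eq_coe hTE F4 ?_ ?_
            · intro e he
              fin_cases he
              exacts [memT hua',
                      memT hua,
                      memT hcz,
                      memT hm1.1.symm,
                      memT hm1.2,
                      memT hm2.1.symm,
                      memT hm2.2,
                      memT hm3.1.symm,
                      memT hm3.2,
                      memT hm4.1.symm,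
                      memT hm4.2]
            · intro e he hne
              fin_cases he
              exacts [absurd (by decide) hne,
                      absurd (by decide) hne,
                      fun hm => nbX ((adjT (by decide) hm).symm),
                      fun hm => nb'X' ((adjT (by decide) hm).symm),
                      fun hm => naY' ((adjT (by decide) hm).symm),
                      fun hm => naZ' ((adjT (by decide) hm)),
                      fun hm => nZ'Y ((adjT (by decide) hm).symm),
                      fun hm => na'Z ((adjT (by decide) hm).symm),
                      fun hm => nZY' ((adjT (by decide) hm)),
                      absurd (by decide) hne,
                      absurd (by decide) hne,
                      absurd (by decide) hne,
                      absurd (by decide) hne,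
                      absurd (by decide) hne,
                      absurd (by decide) hne,
                      absurd (by decide) hne,
                      absurd (by decide) hne,
                      absurd (by decide) hne]
        · -- a' is matched to Z : cycle through a, m2, X', b', m3, b
          have na'b' : ¬ (SimpleGraph.fromEdgeSet T).Adj a' b' := notAdj ha'all (by decide) (by decide)
          obtain rfl : ub' = X' := by
            rcases hub'2 with rfl | h
            · exact absurd hub'.symm na'b'
            · exact h
          exact absurd hacyc (fun hac => cycB hm2.1.symm hm2.2 hub'.symm hm3.2.symm hm3.1 hua.symm hac)
      · -- a is matched to Y'
        have nab : ¬ (SimpleGraph.fromEdgeSet T).Adj a b := notAdj haall (by decide) (by decide)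
        have naZ' : ¬ (SimpleGraph.fromEdgeSet T).Adj a Z' := notAdj haall (by decide) (by decide)
        obtain rfl : ub = X := by
          rcases hub2 with rfl | h
          · exact absurd hub.symm nab
          · exact h
        rcases hua'2 with rfl | rfl
        · -- a' is matched to b' : cycle through X, m1, a', b', m3, b
          exact absurd hacyc (fun hac => cycA hm1.2.symm hm1.1 hua' hm3.2.symm hm3.1 hub hac)
        · -- a' is matched to Z : this is T1
          have na'b' : ¬ (SimpleGraph.fromEdgeSet T).Adj a' b' := notAdj ha'all (by decide) (by decide)
          obtain rfl : ub' = X' := by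
            rcases hub'2 with rfl | h
            · exact absurd hub'.symm na'b'
            · exact h
          obtain rfl : cz = a' := (hzall a' hua'.symm).symm
          have nZY' : ¬ (SimpleGraph.fromEdgeSet T).Adj Z Y' := fun h => absurd (hzall Y' h) (by decide)
          have nZZ' : ¬ (SimpleGraph.fromEdgeSet T).Adj Z Z' := fun h => absurd (hzall Z' h) (by decide)
          obtain rfl : cz' = Y := by
            rcases hcz'3 with rfl | h | rfl
            · exact absurd hcz'.symm naZ'
            · exact h
            · exact absurd hcz'.symm nZZ'
          refine Or.inl ?_
          rw [T1_coe]
          refine T_eq_coe hTE F1 ?_ ?_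
          · intro e he
            fin_cases he
            exacts [memT hub.symm,
                    memT hua.symm,
                    memT hub'.symm,
                    memT hcz'.symm,
                    memT hua'.symm,
                    memT hm1.1.symm,
                    memT hm1.2,
                    memT hm2.1.symm,
                    memT hm2.2,
                    memT hm3.1.symm,
                    memT hm3.2,
                    memT hm4.1.symm,
                    memT hm4.2]
          · intro e he hne
            fin_cases he
            exacts [fun hm => nab ((adjT (by decide) hm)),
                    fun hm => na'b' ((adjT (by decide) hm)),
                    absurd (by decide) hne,
                    absurd (by decide) hne,
                    absurd (by decide) hne,
                    fun hm => naZ' ((adjT (by decide) hm)),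
                    absurd (by decide) hne,
                    absurd (by decide) hne,
                    fun hm => nZY' ((adjT (by decide) hm)),
                    fun hm => nZZ' ((adjT (by decide) hm)),
                    absurd (by decide) hne,
                    absurd (by decide) hne,
                    absurd (by decide) hne,
                    absurd (by decide) hne,
                    absurd (by decide) hne,
                    absurd (by decide) hne,
                    absurd (by decide) hne,
                    absurd (by decide) hne]
      · -- a is matched to Z'
        have nab : ¬ (SimpleGraph.fromEdgeSet T).Adj a b := notAdj haall (by decide) (by decide)
        have naY' : ¬ (SimpleGraph.fromEdgeSet T).Adj a Y' := notAdj haall (by decide) (by decide)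
        obtain rfl : ub = X := by
          rcases hub2 with rfl | h
          · exact absurd hub.symm nab
          · exact h
        obtain rfl : cz' = a := (hz'all a hua.symm).symm
        have nZ'Y : ¬ (SimpleGraph.fromEdgeSet T).Adj Z' Y := fun h => absurd (hz'all Y h) (by decide)
        have nZ'Z : ¬ (SimpleGraph.fromEdgeSet T).Adj Z' Z := fun h => absurd (hz'all Z h) (by decide)
        rcases hua'2 with rfl | rfl
        · -- a' is matched to b' : cycle through X, m1, a', b', m3, b
          exact absurd hacyc (fun hac => cycA hm1.2.symm hm1.1 hua' hm3.2.symm hm3.1 hub hac)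
        · -- a' is matched to Z : this is T3
          have na'b' : ¬ (SimpleGraph.fromEdgeSet T).Adj a' b' := notAdj ha'all (by decide) (by decide)
          obtain rfl : ub' = X' := by
            rcases hub'2 with rfl | h
            · exact absurd hub'.symm na'b'
            · exact h
          obtain rfl : cz = a' := (hzall a' hua'.symm).symm
          have nZY' : ¬ (SimpleGraph.fromEdgeSet T).Adj Z Y' := fun h => absurd (hzall Y' h) (by decide)
          refine Or.inr (Or.inr (Or.inl ?_))
          rw [T3_coe]
          refine T_eq_coe hTE F3 ?_ ?_
          · intro e he
            fin_cases he
            exacts [memT hub.symm,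
                    memT hub'.symm,
                    memT hua,
                    memT hua'.symm,
                    memT hm1.1.symm,
                    memT hm1.2,
                    memT hm2.1.symm,
                    memT hm2.2,
                    memT hm3.1.symm,
                    memT hm3.2,
                    memT hm4.1.symm,
                    memT hm4.2]
          · intro e he hne
            fin_cases he
            exacts [fun hm => nab ((adjT (by decide) hm)),
                    fun hm => na'b' ((adjT (by decide) hm)),
                    absurd (by decide) hne,
                    absurd (by decide) hne,
                    fun hm => naY' ((adjT (by decide) hm).symm),
                    absurd (by decide) hne,
                    fun hm => nZ'Y ((adjT (by decide) hm).symm),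
                    absurd (by decide) hne,
                    fun hm => nZY' ((adjT (by decide) hm)),
                    fun hm => nZ'Z ((adjT (by decide) hm).symm),
                    absurd (by decide) hne,
                    absurd (by decide) hne,
                    absurd (by decide) hne,
                    absurd (by decide) hne,
                    absurd (by decide) hne,
                    absurd (by decide) hne,
                    absurd (by decide) hne,
                    absurd (by decide) hne]
    · rintro (rfl | rfl | rfl | rfl)
      exacts [subtour_1, subtour_2, subtour_3, subtour_4]
  · rw [T1_coe, T2_coe]
    intro h
    exact absurd (Finset.coe_injective h) (by decide)
  · rw [T1_coe, T3_coe]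
    intro h
    exact absurd (Finset.coe_injective h) (by decide)
  · rw [T1_coe, T4_coe]
    intro h
    exact absurd (Finset.coe_injective h) (by decide)
  · rw [T2_coe, T3_coe]
    intro h
    exact absurd (Finset.coe_injective h) (by decide)
  · rw [T2_coe, T4_coe]
    intro h
    exact absurd (Finset.coe_injective h) (by decide)
  · rw [T3_coe, T4_coe]
    intro h
    exact absurd (Finset.coe_injective h) (by decide)
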